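/- Main decentralized surrogate theorem: for product joint policies π_old, π_new in a finite Dec-POMDP with full observability, J(π_new) − J(π_old) ≥ (1/N) Σᵢ 𝓛ⁱ_{π_old}(πⁱ_new) − M̃ Σᵢ √(Dᵢ) − C Σᵢ Dᵢ, where Dᵢ = max_s D_KL(πⁱ_old(·|s) ‖ πⁱ_new(·|s)), M̃ = 2 max_{s,a}|A_old(s,a)| / (1−γ), and C = 4γ max_{s,a}|A_old(s,a)| / (1−γ)². -/

import Mathlib

/-- KL divergence of probability mass functions on a finite set, with convention 0·log 0 = 0. -/
noncomputable def klDiv {A : Type*} [Fintype A] (p q : A → ℝ) : ℝ :=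
  ∑ a, if p a = 0 then 0 else p a * Real.log (p a / q a)

lemma klDiv_eq {A : Type*} [Fintype A] (p q : A → ℝ) :
    klDiv p q = ∑ a, p a * Real.log (p a / q a) := by
  unfold klDiv
  refine Finset.sum_congr rfl fun a _ => ?_
  split_ifs with h
  · simp [h]
  · rfl

lemma hellinger_le_klDiv {A : Type*} [Fintype A] (p q : A → ℝ)
    (hp0 : ∀ a, 0 ≤ p a) (hp1 : ∑ a, p a = 1)
    (hpos : ∀ a, 0 < p a → 0 < q a) :
    2 - 2 * ∑ a, Real.sqrt (p a * q a) ≤ klDiv p q := by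
  rw [klDiv_eq]
  have key : ∀ a, 2 * p a - 2 * Real.sqrt (p a * q a) ≤ p a * Real.log (p a / q a) := by
    intro a
    rcases eq_or_lt_of_le (hp0 a) with h | h
    · simp [← h]
    · have hq := hpos a h
      set x := Real.sqrt (p a / q a) with hx
      have hxpos : 0 < x := Real.sqrt_pos.2 (div_pos h hq)
      have hlog : Real.log (p a / q a) = 2 * Real.log x := by
        rw [hx, Real.log_sqrt (le_of_lt (div_pos h hq))]
        ring
      have hlb : 1 - x⁻¹ ≤ Real.log x := Real.one_sub_inv_le_log_of_pos hxpos
      have hxinv : p a * x⁻¹ = Real.sqrt (p a * q a) := by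
        rw [hx, ← Real.sqrt_inv, inv_div, ← Real.sqrt_sq (le_of_lt h), ← Real.sqrt_mul (sq_nonneg _)]
        congr 1
        field_simp
        ring_nf; rw [Real.sq_sqrt (sq_nonneg _)]
      calc 2 * p a - 2 * Real.sqrt (p a * q a)
          = p a * (2 * (1 - x⁻¹)) := by rw [← hxinv]; ring
        _ ≤ p a * (2 * Real.log x) := by
            apply mul_le_mul_of_nonneg_left _ (le_of_lt h)
            linarith
        _ = p a * Real.log (p a / q a) := by rw [hlog]
  calc 2 - 2 * ∑ a, Real.sqrt (p a * q a)
      = ∑ a, (2 * p a - 2 * Real.sqrt (p a * q a)) := by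
        rw [Finset.sum_sub_distrib, ← Finset.mul_sum, ← Finset.mul_sum, hp1]; ring
    _ ≤ ∑ a, p a * Real.log (p a / q a) := Finset.sum_le_sum fun a _ => key a

lemma sum_sqrt_mul_le_one {A : Type*} [Fintype A] (p q : A → ℝ)
    (hp0 : ∀ a, 0 ≤ p a) (hq0 : ∀ a, 0 ≤ q a)
    (hp1 : ∑ a, p a = 1) (hq1 : ∑ a, q a = 1) :
    ∑ a, Real.sqrt (p a * q a) ≤ 1 := by
  have : ∀ a, Real.sqrt (p a * q a) ≤ (p a + q a) / 2 := by
    intro a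
    have h1 := Real.sq_sqrt (hp0 a)
    have h2 := Real.sq_sqrt (hq0 a)
    have h3 := Real.sqrt_nonneg (p a)
    have h4 := Real.sqrt_nonneg (q a)
    rw [Real.sqrt_mul (hp0 a)]
    nlinarith [sq_nonneg (Real.sqrt (p a) - Real.sqrt (q a))]
  calc ∑ a, Real.sqrt (p a * q a) ≤ ∑ a, (p a + q a) / 2 :=
        Finset.sum_le_sum fun a _ => this a
    _ = 1 := by rw [← Finset.sum_div, Finset.sum_add_distrib, hp1, hq1]; norm_num

lemma klDiv_nonneg {A : Type*} [Fintype A] (p q : A → ℝ)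
    (hp0 : ∀ a, 0 ≤ p a) (hq0 : ∀ a, 0 ≤ q a)
    (hp1 : ∑ a, p a = 1) (hq1 : ∑ a, q a = 1)
    (hpos : ∀ a, 0 < p a → 0 < q a) : 0 ≤ klDiv p q := by
  have h1 := hellinger_le_klDiv p q hp0 hp1 hpos
  have h2 := sum_sqrt_mul_le_one p q hp0 hq0 hp1 hq1
  linarith

lemma l1_le_two_sqrt_klDiv {A : Type*} [Fintype A] (p q : A → ℝ)
    (hp0 : ∀ a, 0 ≤ p a) (hq0 : ∀ a, 0 ≤ q a)
    (hp1 : ∑ a, p a = 1) (hq1 : ∑ a, q a = 1)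
    (hpos : ∀ a, 0 < p a → 0 < q a) :
    ∑ a, |p a - q a| ≤ 2 * Real.sqrt (klDiv p q) := by
  have hH := hellinger_le_klDiv p q hp0 hp1 hpos
  have hS := sum_sqrt_mul_le_one p q hp0 hq0 hp1 hq1
  -- Cauchy–Schwarz
  have hCS := Finset.sum_mul_sq_le_sq_mul_sq Finset.univ
    (fun a => |Real.sqrt (p a) - Real.sqrt (q a)|)
    (fun a => Real.sqrt (p a) + Real.sqrt (q a))
  have habs : ∀ a, |p a - q a| =
      |Real.sqrt (p a) - Real.sqrt (q a)| * (Real.sqrt (p a) + Real.sqrt (q a)) := by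
    intro a
    have h1 := Real.sq_sqrt (hp0 a)
    have h2 := Real.sq_sqrt (hq0 a)
    have h3 := Real.sqrt_nonneg (p a)
    have h4 := Real.sqrt_nonneg (q a)
    rw [← abs_of_nonneg (by linarith : (0:ℝ) ≤ Real.sqrt (p a) + Real.sqrt (q a)),
      ← abs_mul]
    congr 1
    nlinarith
  have hsq1 : ∑ a, |Real.sqrt (p a) - Real.sqrt (q a)| ^ 2 ≤ klDiv p q := by
    have : ∀ a, |Real.sqrt (p a) - Real.sqrt (q a)| ^ 2
        = p a + q a - 2 * Real.sqrt (p a * q a) := by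
      intro a
      rw [sq_abs, Real.sqrt_mul (hp0 a)]
      have h1 := Real.sq_sqrt (hp0 a)
      have h2 := Real.sq_sqrt (hq0 a)
      nlinarith
    rw [Finset.sum_congr rfl fun a _ => this a]
    rw [Finset.sum_sub_distrib, Finset.sum_add_distrib, hp1, hq1, ← Finset.mul_sum]
    linarith
  have hsq2 : ∑ a, (Real.sqrt (p a) + Real.sqrt (q a)) ^ 2 ≤ 4 := by
    have : ∀ a, (Real.sqrt (p a) + Real.sqrt (q a)) ^ 2
        = p a + q a + 2 * Real.sqrt (p a * q a) := by
      intro a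
      rw [Real.sqrt_mul (hp0 a)]
      have h1 := Real.sq_sqrt (hp0 a)
      have h2 := Real.sq_sqrt (hq0 a)
      nlinarith
    rw [Finset.sum_congr rfl fun a _ => this a]
    rw [Finset.sum_add_distrib, Finset.sum_add_distrib, hp1, hq1, ← Finset.mul_sum]
    linarith
  have hkl0 : 0 ≤ klDiv p q := klDiv_nonneg p q hp0 hq0 hp1 hq1 hpos
  have hL1 : (∑ a, |p a - q a|) ^ 2 ≤ klDiv p q * 4 := by
    calc (∑ a, |p a - q a|) ^ 2
        = (∑ a, |Real.sqrt (p a) - Real.sqrt (q a)| * (Real.sqrt (p a) + Real.sqrt (q a))) ^ 2 := by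
          rw [Finset.sum_congr rfl fun a _ => habs a]
      _ ≤ (∑ a, |Real.sqrt (p a) - Real.sqrt (q a)| ^ 2) *
            ∑ a, (Real.sqrt (p a) + Real.sqrt (q a)) ^ 2 := hCS
      _ ≤ klDiv p q * 4 := by
          apply mul_le_mul hsq1 hsq2 (Finset.sum_nonneg fun a _ => sq_nonneg _) hkl0
  have hnn : 0 ≤ ∑ a, |p a - q a| := Finset.sum_nonneg fun a _ => abs_nonneg _
  calc ∑ a, |p a - q a| = Real.sqrt ((∑ a, |p a - q a|) ^ 2) := (Real.sqrt_sq hnn).symm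
    _ ≤ Real.sqrt (klDiv p q * 4) := Real.sqrt_le_sqrt hL1
    _ = 2 * Real.sqrt (klDiv p q) := by
        rw [Real.sqrt_mul hkl0, show (4:ℝ) = 2^2 by norm_num, Real.sqrt_sq (by norm_num : (0:ℝ) ≤ 2)]
        ring

lemma klDiv_prod {N : ℕ} (A : Fin N → Type*) [∀ i, Fintype (A i)]
    (p q : ∀ i, A i → ℝ)
    (hp0 : ∀ i a, 0 ≤ p i a) (hp1 : ∀ i, ∑ a, p i a = 1)
    (hpos : ∀ i a, 0 < p i a → 0 < q i a) :
    klDiv (fun a : ∀ i, A i => ∏ i, p i (a i)) (fun a : ∀ i, A i => ∏ i, q i (a i))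
      = ∑ i, klDiv (p i) (q i) := by
  classical
  set g : Fin N → ∀ j, A j → ℝ :=
    fun i j b => if j = i then p j b * Real.log (p j b / q j b) else p j b with hg
  have hpt : ∀ a : ∀ i, A i,
      (∏ i, p i (a i)) * Real.log ((∏ i, p i (a i)) / (∏ i, q i (a i)))
        = ∑ i, ∏ j, g i j (a j) := by
    intro a
    by_cases hall : ∀ j, 0 < p j (a j)
    · have hq : ∀ j, 0 < q j (a j) := fun j => hpos j (a j) (hall j)
      have hprod : ((∏ i, p i (a i)) / (∏ i, q i (a i))) = ∏ i, p i (a i) / q i (a i) := by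
        rw [Finset.prod_div_distrib]
      have hlog : Real.log ((∏ i, p i (a i)) / (∏ i, q i (a i)))
          = ∑ i, Real.log (p i (a i) / q i (a i)) := by
        rw [hprod, Real.log_prod]
        intro i _
        exact ne_of_gt (div_pos (hall i) (hq i))
      rw [hlog, Finset.mul_sum]
      refine Finset.sum_congr rfl fun i _ => ?_
      have : ∏ j, g i j (a j)
          = g i i (a i) * ∏ j ∈ Finset.univ.erase i, g i j (a j) :=
        (Finset.mul_prod_erase Finset.univ _ (Finset.mem_univ i)).symm
      rw [this]
      have herase : ∏ j ∈ Finset.univ.erase i, g i j (a j)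
          = ∏ j ∈ Finset.univ.erase i, p j (a j) := by
        refine Finset.prod_congr rfl fun j hj => ?_
        simp [hg, Finset.ne_of_mem_erase hj]
      rw [herase]
      have hgii : g i i (a i) = p i (a i) * Real.log (p i (a i) / q i (a i)) := by simp [hg]
      rw [hgii, ← Finset.mul_prod_erase Finset.univ (fun j => p j (a j)) (Finset.mem_univ i)]
      ring
    · push_neg at hall
      obtain ⟨j0, hj0⟩ := hall
      have hz : p j0 (a j0) = 0 := le_antisymm hj0 (hp0 j0 (a j0))
      have hL : (∏ i, p i (a i)) = 0 := Finset.prod_eq_zero (Finset.mem_univ j0) hz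
      rw [hL]
      have : ∀ i, ∏ j, g i j (a j) = 0 := by
        intro i
        refine Finset.prod_eq_zero (Finset.mem_univ j0) ?_
        by_cases h : j0 = i
        · simp only [hg, h, if_pos rfl]
          exact mul_eq_zero.2 (Or.inl (h ▸ hz))
        · simp [hg, h, hz]
      rw [Finset.sum_congr rfl fun i _ => this i]
      simp
  rw [klDiv_eq, Finset.sum_congr rfl fun a _ => hpt a, Finset.sum_comm]
  refine Finset.sum_congr rfl fun i _ => ?_
  rw [← Fintype.prod_sum (g i)]
  have : ∏ j, ∑ b, g i j b
      = (∑ b, g i i b) * ∏ j ∈ Finset.univ.erase i, ∑ b, g i j b :=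
    (Finset.mul_prod_erase Finset.univ _ (Finset.mem_univ i)).symm
  rw [this]
  have h1 : ∑ b, g i i b = klDiv (p i) (q i) := by
    rw [klDiv_eq]; simp [hg]
  have h2 : ∏ j ∈ Finset.univ.erase i, ∑ b, g i j b = 1 := by
    refine Finset.prod_eq_one fun j hj => ?_
    have : ∀ b, g i j b = p j b := fun b => by simp [hg, Finset.ne_of_mem_erase hj]
    rw [Finset.sum_congr rfl fun b _ => this b, hp1]
  rw [h1, h2, mul_one]

lemma l1_prod_le_aux {N : ℕ} (A : Fin N → Type*) [∀ i, Fintype (A i)]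
    (p q : ∀ i, A i → ℝ)
    (hp0 : ∀ i a, 0 ≤ p i a) (hq0 : ∀ i a, 0 ≤ q i a)
    (hp1 : ∀ i, ∑ a, p i a = 1) (hq1 : ∀ i, ∑ a, q i a = 1)
    (t : Finset (Fin N)) :
    ∑ a : ∀ i, A i, |(∏ j, (if j ∈ t then p j (a j) else q j (a j))) - ∏ j, q j (a j)|
      ≤ ∑ j ∈ t, ∑ b, |p j b - q j b| := by
  classical
  induction t using Finset.induction_on with
  | empty => simp
  | @insert k t hk ih =>
    have hmem : ∀ (j : Fin N), j ≠ k → (j ∈ insert k t ↔ j ∈ t) := by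
      intro j hj; simp [Finset.mem_insert, hj]
    -- the middle hybrid
    set Y : (∀ i, A i) → ℝ := fun a => ∏ j, (if j ∈ t then p j (a j) else q j (a j)) with hY
    set X : (∀ i, A i) → ℝ := fun a => ∏ j, (if j ∈ insert k t then p j (a j) else q j (a j)) with hX
    have htri : ∀ a : ∀ i, A i, |X a - ∏ j, q j (a j)|
        ≤ |X a - Y a| + |Y a - ∏ j, q j (a j)| := fun a => abs_sub_le _ _ _
    have hstep : ∑ a : ∀ i, A i, |X a - Y a| = ∑ b, |p k b - q k b| := by
      set u : ∀ j, A j → ℝ := fun j b =>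
        if j = k then |p j b - q j b| else (if j ∈ t then p j b else q j b) with hu
      have hpt : ∀ a : ∀ i, A i, |X a - Y a| = ∏ j, u j (a j) := by
        intro a
        have hXa : X a = p k (a k) * ∏ j ∈ Finset.univ.erase k,
            (if j ∈ t then p j (a j) else q j (a j)) := by
          rw [hX]; dsimp only
          rw [← Finset.mul_prod_erase Finset.univ _ (Finset.mem_univ k)]
          simp only [Finset.mem_insert_self, if_pos]
          congr 1
          refine Finset.prod_congr rfl fun j hj => ?_
          simp only [hmem j (Finset.ne_of_mem_erase hj)]
        have hYa : Y a = q k (a k) * ∏ j ∈ Finset.univ.erase k,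
            (if j ∈ t then p j (a j) else q j (a j)) := by
          rw [hY]; dsimp only
          rw [← Finset.mul_prod_erase Finset.univ _ (Finset.mem_univ k)]
          simp [hk]
        have hprodnn : 0 ≤ ∏ j ∈ Finset.univ.erase k,
            (if j ∈ t then p j (a j) else q j (a j)) := by
          refine Finset.prod_nonneg fun j _ => ?_
          split_ifs
          · exact hp0 j (a j)
          · exact hq0 j (a j)
        have : ∏ j, u j (a j) = |p k (a k) - q k (a k)| * ∏ j ∈ Finset.univ.erase k,
            (if j ∈ t then p j (a j) else q j (a j)) := by
          rw [← Finset.mul_prod_erase Finset.univ _ (Finset.mem_univ k)]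
          simp only [hu, if_pos rfl]
          congr 1
          refine Finset.prod_congr rfl fun j hj => ?_
          simp [Finset.ne_of_mem_erase hj]
        rw [this, hXa, hYa, ← sub_mul, abs_mul, abs_of_nonneg hprodnn]
      rw [Finset.sum_congr rfl fun a _ => hpt a, ← Fintype.prod_sum u]
      rw [← Finset.mul_prod_erase Finset.univ _ (Finset.mem_univ k)]
      have h1 : ∑ b, u k b = ∑ b, |p k b - q k b| := by
        refine Finset.sum_congr rfl fun b _ => ?_
        simp [hu]
      have h2 : ∏ j ∈ Finset.univ.erase k, ∑ b, u j b = 1 := by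
        refine Finset.prod_eq_one fun j hj => ?_
        have : ∀ b, u j b = if j ∈ t then p j b else q j b := fun b => by
          simp [hu, Finset.ne_of_mem_erase hj]
        rw [Finset.sum_congr rfl fun b _ => this b]
        split_ifs
        · exact hp1 j
        · exact hq1 j
      rw [h1, h2, mul_one]
    calc ∑ a : ∀ i, A i, |X a - ∏ j, q j (a j)|
        ≤ ∑ a : ∀ i, A i, (|X a - Y a| + |Y a - ∏ j, q j (a j)|) :=
          Finset.sum_le_sum fun a _ => htri a
      _ = (∑ b, |p k b - q k b|) + ∑ a : ∀ i, A i, |Y a - ∏ j, q j (a j)| := by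
          rw [Finset.sum_add_distrib, hstep]
      _ ≤ (∑ b, |p k b - q k b|) + ∑ j ∈ t, ∑ b, |p j b - q j b| := by
          exact add_le_add_right ih _
      _ = ∑ j ∈ insert k t, ∑ b, |p j b - q j b| := by rw [Finset.sum_insert hk]

lemma l1_prod_le {N : ℕ} (A : Fin N → Type*) [∀ i, Fintype (A i)]
    (p q : ∀ i, A i → ℝ)
    (hp0 : ∀ i a, 0 ≤ p i a) (hq0 : ∀ i a, 0 ≤ q i a)
    (hp1 : ∀ i, ∑ a, p i a = 1) (hq1 : ∀ i, ∑ a, q i a = 1) :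
    ∑ a : ∀ i, A i, |(∏ j, p j (a j)) - ∏ j, q j (a j)|
      ≤ ∑ j, ∑ b, |p j b - q j b| := by
  have := l1_prod_le_aux A p q hp0 hq0 hp1 hq1 Finset.univ
  simpa using this

/-- the main decentralized surrogate theorem. Assuming the (joint) TRPO lower
bound, the joint policy improvement is lower bounded by the average of the individual
surrogates minus penalty terms involving only individual maximal KL divergences. -/
theorem decentralized_surrogate_bound
    {S : Type*} [Fintype S] [Nonempty S]
    {N : ℕ} (hN : 0 < N) (A : Fin N → Type*) [∀ i, Fintype (A i)]
    (γ M : ℝ) (hγ0 : 0 ≤ γ) (hγ1 : γ < 1) (hM0 : 0 ≤ M)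
    -- old and new individual policies (joint policies are their products)
    (πold πnew : ∀ i, S → A i → ℝ)
    (hold0 : ∀ i s a, 0 ≤ πold i s a) (hold1 : ∀ i s, ∑ a, πold i s a = 1)
    (hnew0 : ∀ i s a, 0 ≤ πnew i s a) (hnew1 : ∀ i s, ∑ a, πnew i s a = 1)
    (hpos : ∀ i s a, 0 < πold i s a → 0 < πnew i s a)
    -- discounted state distribution of the old joint policy
    (ρ : S → ℝ) (hρ0 : ∀ s, 0 ≤ ρ s) (hρ1 : ∑ s, ρ s = 1 / (1 - γ))
    -- advantage of the old joint policy, with M = max |A_old|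
    (Adv : S → (∀ i, A i) → ℝ) (hAdv : ∀ s a, |Adv s a| ≤ M)
    -- expected returns of the new and old joint policies
    (Jnew Jold : ℝ)
    -- the TRPO lower bound (Schulman et al. 2015), assumed
    (hTRPO : Jnew - Jold ≥
      (∑ s, ρ s * ∑ a : ∀ i, A i, (∏ i, πnew i s (a i)) * Adv s a)
        - (4 * γ * M / (1 - γ) ^ 2) *
            ⨆ s : S, klDiv (fun a : ∀ i, A i => ∏ i, πold i s (a i))
              (fun a : ∀ i, A i => ∏ i, πnew i s (a i))) :
    Jnew - Jold ≥
      (1 / (N : ℝ)) * ∑ i, (∑ s, ρ s * ∑ a : ∀ j, A j,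
          (πnew i s (a i) * ∏ j ∈ Finset.univ.erase i, πold j s (a j)) * Adv s a)
        - (2 * M / (1 - γ)) * ∑ i, Real.sqrt (⨆ s : S, klDiv (πold i s) (πnew i s))
        - (4 * γ * M / (1 - γ) ^ 2) * ∑ i, ⨆ s : S, klDiv (πold i s) (πnew i s) := by
  classical
  have h1γ : 0 < 1 - γ := by linarith
  set D : Fin N → ℝ := fun i => ⨆ s : S, klDiv (πold i s) (πnew i s) with hD
  have hD_le : ∀ i s, klDiv (πold i s) (πnew i s) ≤ D i := by
    intro i s
    exact le_ciSup (f := fun s => klDiv (πold i s) (πnew i s))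
      (Set.Finite.bddAbove (Set.finite_range _)) s
  have hsup : (⨆ s : S, klDiv (fun a : ∀ i, A i => ∏ i, πold i s (a i))
      (fun a : ∀ i, A i => ∏ i, πnew i s (a i))) ≤ ∑ i, D i := by
    refine ciSup_le fun s => ?_
    rw [klDiv_prod A (fun i => πold i s) (fun i => πnew i s) (fun i a => hold0 i s a)
      (fun i => hold1 i s) (fun i a => hpos i s a)]
    exact Finset.sum_le_sum fun i _ => hD_le i s
  have hC : 0 ≤ 4 * γ * M / (1 - γ) ^ 2 := by positivity
  set Lj : ℝ := ∑ s, ρ s * ∑ a : ∀ i, A i, (∏ i, πnew i s (a i)) * Adv s a with hLj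
  -- per-state per-agent L1 bound
  have hl1 : ∀ (i : Fin N) (s : S), ∑ a : ∀ j, A j,
      |(πnew i s (a i) * ∏ j ∈ Finset.univ.erase i, πold j s (a j)) - ∏ j, πnew j s (a j)|
        ≤ ∑ j, 2 * Real.sqrt (D j) := by
    intro i s
    set r : ∀ j, A j → ℝ := fun j b => if j = i then πnew j s b else πold j s b with hr
    have hrprod : ∀ a : ∀ j, A j,
        πnew i s (a i) * ∏ j ∈ Finset.univ.erase i, πold j s (a j) = ∏ j, r j (a j) := by
      intro a
      rw [← Finset.mul_prod_erase Finset.univ _ (Finset.mem_univ i)]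
      congr 1
      · simp [hr]
      · exact (Finset.prod_congr rfl fun j hj => by
          simp [hr, Finset.ne_of_mem_erase hj]).symm
    have hr0 : ∀ j b, 0 ≤ r j b := by
      intro j b; rw [hr]; dsimp only; split_ifs
      · exact hnew0 j s b
      · exact hold0 j s b
    have hr1 : ∀ j, ∑ b, r j b = 1 := by
      intro j
      rw [hr]; dsimp only; split_ifs with h
      · exact hnew1 j s
      · exact hold1 j s
    calc ∑ a : ∀ j, A j,
        |(πnew i s (a i) * ∏ j ∈ Finset.univ.erase i, πold j s (a j)) - ∏ j, πnew j s (a j)|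
        = ∑ a : ∀ j, A j, |(∏ j, r j (a j)) - ∏ j, πnew j s (a j)| := by
          refine Finset.sum_congr rfl fun a _ => ?_
          rw [hrprod a]
      _ ≤ ∑ j, ∑ b, |r j b - πnew j s b| :=
          l1_prod_le A r (fun j => πnew j s) hr0 (fun j b => hnew0 j s b) hr1
            (fun j => hnew1 j s)
      _ ≤ ∑ j, 2 * Real.sqrt (D j) := by
          refine Finset.sum_le_sum fun j _ => ?_
          by_cases h : j = i
          · have : ∀ b, r j b - πnew j s b = 0 := by
              intro b; rw [hr]; dsimp only; rw [if_pos h]; ring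
            rw [Finset.sum_congr rfl fun b _ => by rw [this b, abs_zero]]
            rw [Finset.sum_const, smul_zero]
            positivity
          · have : ∀ b, |r j b - πnew j s b| = |πold j s b - πnew j s b| := by
              intro b; rw [hr]; dsimp only; rw [if_neg h]
            rw [Finset.sum_congr rfl fun b _ => this b]
            calc ∑ b, |πold j s b - πnew j s b|
                ≤ 2 * Real.sqrt (klDiv (πold j s) (πnew j s)) :=
                  l1_le_two_sqrt_klDiv _ _ (hold0 j s) (hnew0 j s) (hold1 j s)
                    (hnew1 j s) (hpos j s)
              _ ≤ 2 * Real.sqrt (D j) := by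
                  have := Real.sqrt_le_sqrt (hD_le j s)
                  linarith
  -- per agent surrogate bound
  have hkey : ∀ i : Fin N, (∑ s, ρ s * ∑ a : ∀ j, A j,
      (πnew i s (a i) * ∏ j ∈ Finset.univ.erase i, πold j s (a j)) * Adv s a)
      ≤ Lj + (2 * M / (1 - γ)) * ∑ j, Real.sqrt (D j) := by
    intro i
    have hper : ∀ s, (∑ a : ∀ j, A j,
        (πnew i s (a i) * ∏ j ∈ Finset.univ.erase i, πold j s (a j)) * Adv s a)
        - (∑ a : ∀ j, A j, (∏ j, πnew j s (a j)) * Adv s a)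
        ≤ M * ∑ j, 2 * Real.sqrt (D j) := by
      intro s
      rw [← Finset.sum_sub_distrib]
      calc ∑ a : ∀ j, A j,
          ((πnew i s (a i) * ∏ j ∈ Finset.univ.erase i, πold j s (a j)) * Adv s a
            - (∏ j, πnew j s (a j)) * Adv s a)
          = ∑ a : ∀ j, A j,
            ((πnew i s (a i) * ∏ j ∈ Finset.univ.erase i, πold j s (a j))
              - ∏ j, πnew j s (a j)) * Adv s a := by
            refine Finset.sum_congr rfl fun a _ => ?_; ring
        _ ≤ ∑ a : ∀ j, A j,
            |((πnew i s (a i) * ∏ j ∈ Finset.univ.erase i, πold j s (a j))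
              - ∏ j, πnew j s (a j)) * Adv s a| :=
            Finset.sum_le_sum fun a _ => le_abs_self _
        _ = ∑ a : ∀ j, A j,
            |(πnew i s (a i) * ∏ j ∈ Finset.univ.erase i, πold j s (a j))
              - ∏ j, πnew j s (a j)| * |Adv s a| := by
            refine Finset.sum_congr rfl fun a _ => abs_mul _ _
        _ ≤ ∑ a : ∀ j, A j,
            |(πnew i s (a i) * ∏ j ∈ Finset.univ.erase i, πold j s (a j))
              - ∏ j, πnew j s (a j)| * M :=
            Finset.sum_le_sum fun a _ =>
              mul_le_mul_of_nonneg_left (hAdv s a) (abs_nonneg _)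
        _ = M * ∑ a : ∀ j, A j,
            |(πnew i s (a i) * ∏ j ∈ Finset.univ.erase i, πold j s (a j))
              - ∏ j, πnew j s (a j)| := by
            rw [← Finset.sum_mul]; ring
        _ ≤ M * ∑ j, 2 * Real.sqrt (D j) :=
            mul_le_mul_of_nonneg_left (hl1 i s) hM0
    have hsumS : (∑ s, ρ s * ∑ a : ∀ j, A j,
        (πnew i s (a i) * ∏ j ∈ Finset.univ.erase i, πold j s (a j)) * Adv s a) - Lj
        ≤ (∑ s, ρ s) * (M * ∑ j, 2 * Real.sqrt (D j)) := by
      rw [hLj, ← Finset.sum_sub_distrib, Finset.sum_mul]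
      refine Finset.sum_le_sum fun s _ => ?_
      rw [← mul_sub]
      exact mul_le_mul_of_nonneg_left (hper s) (hρ0 s)
    rw [hρ1] at hsumS
    have heq : (1 / (1 - γ)) * (M * ∑ j, 2 * Real.sqrt (D j))
        = (2 * M / (1 - γ)) * ∑ j, Real.sqrt (D j) := by
      rw [show (∑ j, 2 * Real.sqrt (D j)) = 2 * ∑ j, Real.sqrt (D j) by
        rw [Finset.mul_sum]]
      field_simp
    rw [heq] at hsumS
    linarith
  have hNpos : (0:ℝ) < (N:ℝ) := by exact_mod_cast hN
  have hsum : ∑ i, (∑ s, ρ s * ∑ a : ∀ j, A j,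
      (πnew i s (a i) * ∏ j ∈ Finset.univ.erase i, πold j s (a j)) * Adv s a)
      ≤ (N:ℝ) * (Lj + (2 * M / (1 - γ)) * ∑ j, Real.sqrt (D j)) := by
    calc ∑ i, (∑ s, ρ s * ∑ a : ∀ j, A j,
        (πnew i s (a i) * ∏ j ∈ Finset.univ.erase i, πold j s (a j)) * Adv s a)
        ≤ ∑ _i : Fin N, (Lj + (2 * M / (1 - γ)) * ∑ j, Real.sqrt (D j)) :=
          Finset.sum_le_sum fun i _ => hkey i
      _ = (N:ℝ) * (Lj + (2 * M / (1 - γ)) * ∑ j, Real.sqrt (D j)) := by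
          rw [Finset.sum_const, Finset.card_univ, Fintype.card_fin, nsmul_eq_mul]
  have havg : (1 / (N:ℝ)) * ∑ i, (∑ s, ρ s * ∑ a : ∀ j, A j,
      (πnew i s (a i) * ∏ j ∈ Finset.univ.erase i, πold j s (a j)) * Adv s a)
      ≤ Lj + (2 * M / (1 - γ)) * ∑ j, Real.sqrt (D j) := by
    calc (1 / (N:ℝ)) * ∑ i, (∑ s, ρ s * ∑ a : ∀ j, A j,
        (πnew i s (a i) * ∏ j ∈ Finset.univ.erase i, πold j s (a j)) * Adv s a)
        ≤ (1 / (N:ℝ)) * ((N:ℝ) * (Lj + (2 * M / (1 - γ)) * ∑ j, Real.sqrt (D j))) :=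
          mul_le_mul_of_nonneg_left hsum (by positivity)
      _ = Lj + (2 * M / (1 - γ)) * ∑ j, Real.sqrt (D j) := by
          field_simp
  have hTRPO' : Jnew - Jold ≥ Lj - (4 * γ * M / (1 - γ) ^ 2) * ∑ i, D i := by
    have hmul := mul_le_mul_of_nonneg_left hsup hC
    linarith
  linarith
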